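/- Let A be a small dg category whose Hom-complexes have cohomology concentrated in degrees (−∞, m] for some integer m. If a dg A-module M belongs to D^{≤s}A (the shift by −s of the aisle generated by the representable modules), then H^i M(A) = 0 for every object A of A and every integer i > m + s. Moreover, if m = 0, the converse holds: a dg module M with H^i M(A) = 0 for all i > s and all objects A lies in D^{≤s}A. -/

import Mathlib

set_option linter.unusedSectionVars false
set_option linter.unusedVariables false
set_option maxHeartbeats 1000000


open CategoryTheory Limits Pretriangulated

universe v u

variable {C : Type u} [Category.{v} C] [Preadditive C] [Limits.HasZeroObject C]
  [HasShift C ℤ] [∀ n : ℤ, (shiftFunctor C n).Additive] [Pretriangulated C]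

/-- `S` is a strictly full suspended subcategory of `C` containing `Q` and closed under
small coproducts. -/
def SuspClosed (Q S : Set C) : Prop :=
  Q ⊆ S ∧
  (∀ ⦃X Y : C⦄, (X ≅ Y) → X ∈ S → Y ∈ S) ∧
  (∀ X ∈ S, X⟦(1 : ℤ)⟧ ∈ S) ∧
  (∀ T ∈ (distTriang C), T.obj₁ ∈ S → T.obj₃ ∈ S → T.obj₂ ∈ S) ∧
  (∀ (ι : Type v) (f : ι → C) (c : Cofan f), IsColimit c → (∀ i, f i ∈ S) → c.pt ∈ S)

/-- `Susp Q`: the smallest full suspended subcategory of `C` containing `Q` and closed under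
small coproducts. -/
def Susp (Q : Set C) : Set C := ⋂₀ {S | SuspClosed Q S}

/-- The canonical map `⨁ᵢ Hom(P, fᵢ) ⟶ Hom(P, pt)` induced by a cofan. -/
noncomputable def sumToHom {ι : Type v} (f : ι → C) (c : Cofan f) (P : C) :
    DirectSum ι (fun i => P ⟶ f i) →+ (P ⟶ c.pt) :=
  letI := Classical.decEq ι
  DirectSum.toAddMonoid (fun i => AddMonoidHom.mk' (fun g => g ≫ c.inj i)
    (fun _ _ => Preadditive.add_comp _ _ _ _ _ _))

/-- `P` is a compact object of `C`: `Hom(P, ?)` takes small coproducts to direct sums. -/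
def IsCompactObj (P : C) : Prop :=
  ∀ (ι : Type v) (f : ι → C) (c : Cofan f), IsColimit c →
    Function.Bijective (sumToHom f c P)

noncomputable def shEquiv' (a b : ℤ) (hab : a + b = 0) (X Y : C) :
    (X⟦a⟧ ⟶ Y) ≃+ (X ⟶ Y⟦b⟧) :=
  AddEquiv.mk' ((shiftEquiv' C a b hab).toAdjunction.homEquiv X Y) (by
    intro f g
    haveI : (shiftEquiv' C a b hab).functor.Additive := inferInstanceAs (shiftFunctor C a).Additive
    haveI : (shiftEquiv' C a b hab).inverse.Additive := inferInstanceAs (shiftFunctor C b).Additive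
    exact ((shiftEquiv' C a b hab).toAdjunction.homAddEquiv X Y).map_add f g)
lemma shEquiv'_apply (a b : ℤ) (hab : a + b = 0) {X Y : C} (f : X⟦a⟧ ⟶ Y) :
    shEquiv' a b hab X Y f = (shiftEquiv' C a b hab).toAdjunction.homEquiv X Y f := rfl
lemma shEquiv'_comp (a b : ℤ) (hab : a + b = 0) {X Y Z : C} (f : X⟦a⟧ ⟶ Y) (g : Y ⟶ Z) :
    shEquiv' a b hab X Z (f ≫ g) = shEquiv' a b hab X Y f ≫ g⟦b⟧' := by
  rw [shEquiv'_apply, shEquiv'_apply]; exact Adjunction.homEquiv_naturality_right _ f g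
noncomputable abbrev shEquiv (a : ℤ) (X Y : C) : (X⟦a⟧ ⟶ Y) ≃+ (X ⟶ Y⟦-a⟧) :=
  shEquiv' a (-a) (add_neg_cancel a) X Y
lemma shEquiv_comp (a : ℤ) {X Y Z : C} (f : X⟦a⟧ ⟶ Y) (g : Y ⟶ Z) :
    shEquiv a X Z (f ≫ g) = shEquiv a X Y f ≫ g⟦(-a : ℤ)⟧' :=
  shEquiv'_comp a (-a) _ f g
noncomputable def shCofan {J : Type v} (f : J → C) (c : Cofan f) (n : ℤ) :
    Cofan (fun j => (f j)⟦n⟧) :=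
  Cofan.mk (c.pt⟦n⟧) (fun j => (c.inj j)⟦n⟧')
noncomputable def shCofanIsColimit {J : Type v} (f : J → C) (c : Cofan f) (hc : IsColimit c)
    (n : ℤ) : IsColimit (shCofan f c n) := by
  let e : Discrete.functor f ⋙ shiftFunctor C n ≅ Discrete.functor (fun j => (f j)⟦n⟧) :=
    Discrete.natIso (fun j => Iso.refl _)
  refine IsColimit.precomposeHomEquiv e (shCofan f c n) ?_
  refine (isColimitOfPreserves (shiftFunctor C n) hc).ofIsoColimit ?_
  exact Cocones.ext (Iso.refl _) (by rintro ⟨j⟩; simp [shCofan, e, Cofan.inj])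

lemma sumToHom_of {ι : Type v} (f : ι → C) (c : Cofan f) (P : C) [DecidableEq ι]
    (j : ι) (g : P ⟶ f j) :
    sumToHom f c P (DirectSum.of (fun i => P ⟶ f i) j g) = g ≫ c.inj j := by
  classical
  unfold sumToHom
  rw [Subsingleton.elim (Classical.decEq ι) ‹DecidableEq ι›]
  rw [DirectSum.toAddMonoid_of]; rfl

lemma isCompactObj_shift {P : C} (h : IsCompactObj P) (n : ℤ) : IsCompactObj (P⟦n⟧) := by
  classical
  intro J f c hc
  have hb := h J (fun j => (f j)⟦(-n:ℤ)⟧) (shCofan f c (-n)) (shCofanIsColimit f c hc (-n))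
  let D : (DirectSum J (fun j => P⟦n⟧ ⟶ f j)) ≃+ DirectSum J (fun j => P ⟶ (f j)⟦(-n:ℤ)⟧) :=
    DFinsupp.mapRange.addEquiv (fun j => shEquiv n P (f j))
  let E := shEquiv n P c.pt
  have key : ∀ x, E (sumToHom f c (P⟦n⟧) x) = sumToHom _ (shCofan f c (-n)) P (D x) := by
    intro x
    induction x using DirectSum.induction_on with
    | zero => simp; rfl
    | of j g =>
      have hD : D (DirectSum.of _ j g) = DirectSum.of _ j (shEquiv n P (f j) g) := by
        show DFinsupp.mapRange (fun i x => (shEquiv n P (f i)) x) (fun _ => map_zero _)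
          (DFinsupp.single j g) = DFinsupp.single j ((shEquiv n P (f j)) g)
        exact DFinsupp.mapRange_single
      rw [hD, sumToHom_of, sumToHom_of, shEquiv_comp]
      rfl
    | add x y hx hy => simp only [map_add, hx, hy]; rfl
  have hfun : ⇑(sumToHom f c (P⟦n⟧)) = ⇑E.symm ∘ ⇑(sumToHom _ (shCofan f c (-n)) P) ∘ ⇑D := by
    funext x
    exact (E.symm_apply_apply _).symm.trans (congrArg E.symm (key x))
  rw [hfun]
  exact E.symm.bijective.comp (hb.comp D.bijective)

lemma hom_zero_into_cofan {P : C} (h : IsCompactObj P) {J : Type v} (f : J → C)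
    (c : Cofan f) (hc : IsColimit c) (hz : ∀ j (g : P ⟶ f j), g = 0)
    (g : P ⟶ c.pt) : g = 0 := by
  classical
  obtain ⟨x, hx⟩ := (h J f c hc).2 g
  have hx0 : x = 0 := DFinsupp.ext fun j => hz j _
  rw [← hx, hx0, map_zero]

lemma susp_suspClosed (Q : Set C) : SuspClosed Q (Susp Q) := by
  refine ⟨?_, ?_, ?_, ?_, ?_⟩
  · intro x hx S hS; exact hS.1 hx
  · intro X Y e hX S hS; exact hS.2.1 e (hX S hS)
  · intro X hX S hS; exact hS.2.2.1 X (hX S hS)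
  · intro T hT h1 h3 S hS; exact hS.2.2.2.1 T hT (h1 S hS) (h3 S hS)
  · intro J f c hc hf S hS; exact hS.2.2.2.2 J f c hc (fun i => hf i S hS)

lemma susp_subset {Q S : Set C} (hS : SuspClosed Q S) : Susp Q ⊆ S :=
  fun _ hx => hx S hS

lemma mem_susp_self {Q : Set C} {X : C} (hX : X ∈ Q) : X ∈ Susp Q :=
  (susp_suspClosed Q).1 hX

/-- cones of maps between members of a SuspClosed class stay in the class -/
lemma suspClosed_cone {Q S : Set C} (hS : SuspClosed Q S) (T : Triangle C)
    (hT : T ∈ distTriang C) (h1 : T.obj₁ ∈ S) (h2 : T.obj₂ ∈ S) : T.obj₃ ∈ S := by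
  have := hS.2.2.2.1 T.rotate (rot_of_distTriang T hT) h2 (hS.2.2.1 _ h1)
  exact this

/-- nonneg shifts stay in a SuspClosed class -/
lemma suspClosed_shift_nonneg {Q S : Set C} (hS : SuspClosed Q S) {X : C} (hX : X ∈ S) :
    ∀ (n : ℤ), 0 ≤ n → X⟦n⟧ ∈ S := by
  have key : ∀ k : ℕ, X⟦(k : ℤ)⟧ ∈ S := by
    intro k
    induction k with
    | zero => exact hS.2.1 ((shiftFunctorZero C ℤ).symm.app X) hX
    | succ k ih =>
      exact hS.2.1 ((shiftFunctorAdd' C (k : ℤ) 1 ((k : ℤ)+1) rfl).symm.app X)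
        (hS.2.2.1 _ ih)
      
  intro n hn
  obtain ⟨k, rfl⟩ := Int.eq_ofNat_of_zero_le hn
  exact key k

lemma van_push {X : C} {P : C} (w w' : ℤ) (hww' : w + w' = 0)
    (h : ∀ f : P⟦w⟧ ⟶ X, f = 0) : ∀ g : P ⟶ X⟦w'⟧, g = 0 := by
  obtain rfl : w' = -w := by omega
  intro g
  rw [← (shEquiv w P X).apply_symm_apply g, h ((shEquiv w P X).symm g), map_zero]

lemma van_pull {X : C} {P : C} (w : ℤ) (h : ∀ g : P ⟶ X⟦(-w : ℤ)⟧, g = 0) :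
    ∀ f : P⟦w⟧ ⟶ X, f = 0 := fun f => (shEquiv w P X).map_eq_zero_iff.mp (h _)

lemma van_shift {X : C} {P : C} (u a w : ℤ) (hw : w = u - a)
    (h : ∀ f : P⟦w⟧ ⟶ X, f = 0) : ∀ f : P⟦u⟧ ⟶ X⟦a⟧, f = 0 := by
  apply van_pull
  intro g
  have hiso : ∀ g' : P ⟶ X⟦a + -u⟧, g' = 0 := van_push w (a + -u) (by omega) h
  have : g = (g ≫ ((shiftFunctorAdd C a (-u)).app X).inv) ≫
      ((shiftFunctorAdd C a (-u)).app X).hom := by simp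
  rw [this, hiso (g ≫ ((shiftFunctorAdd C a (-u)).app X).inv), zero_comp]

lemma inj_precomp_shift {Y N' : C} (r : Y ⟶ N') (P : C)
    (h : ∀ (g : P⟦(-1 : ℤ)⟧ ⟶ Y), g ≫ r = 0 → g = 0) :
    ∀ g : P ⟶ Y⟦(1 : ℤ)⟧, g ≫ r⟦(1 : ℤ)⟧' = 0 → g = 0 := by
  intro g hg
  obtain ⟨g0, rfl⟩ : ∃ g0, shEquiv' (-1) 1 (by omega) P Y g0 = g :=
    ⟨(shEquiv' (-1) 1 (by omega) P Y).symm g, AddEquiv.apply_symm_apply _ g⟩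
  rw [← shEquiv'_comp] at hg
  have h0 : g0 ≫ r = 0 := (shEquiv' (-1) 1 (by omega) P N').map_eq_zero_iff.mp hg
  rw [h g0 h0, map_zero]

section Main
variable {ι : Type v} (G : ι → C)

def VanLt (m' : ℤ) : Set C :=
  {X | ∀ (i : ι) (u : ℤ), u < m' → ∀ f : (G i)⟦u⟧ ⟶ X, f = 0}

lemma suspClosed_vanLt (hcpt : ∀ i, IsCompactObj (G i)) (m' : ℤ)
    (hGG : ∀ i j (u : ℤ), u < m' → ∀ f : (G i)⟦u⟧ ⟶ G j, f = 0) :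
    SuspClosed (Set.range G) (VanLt G m') := by
  refine ⟨?_, ?_, ?_, ?_, ?_⟩
  · rintro _ ⟨j, rfl⟩ i u hu f
    exact hGG i j u hu f
  · intro X Y e hX i u hu f
    have h0 : (f ≫ e.inv) = 0 := hX i u hu _
    rw [← Category.comp_id f, ← e.inv_hom_id, ← Category.assoc, h0, zero_comp]
  · intro X hX i u hu f
    exact van_shift u 1 (u - 1) rfl (fun f' => hX i (u-1) (by omega) f') f
  · intro T hT h1 h3 i u hu f
    obtain ⟨g, rfl⟩ := Triangle.coyoneda_exact₂ T hT f (h3 i u hu _)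
    rw [h1 i u hu g, zero_comp]
  · intro J f c hc hf i u hu g
    exact hom_zero_into_cofan (isCompactObj_shift (hcpt i) u) f c hc
      (fun j g' => hf j i u hu g') g

variable [HasCoproducts.{v} C]

lemma exists_P (hcpt : ∀ i, IsCompactObj (G i))
    (hGG0 : ∀ i j (u : ℤ), u < 0 → ∀ f : (G i)⟦u⟧ ⟶ G j, f = 0) (Z : C) :
    ∃ (W : C) (ψ : W ⟶ Z), W ∈ Susp (Set.range G) ∧
      (∀ i (u : ℤ), u < 0 → ∀ f : (G i)⟦u⟧ ⟶ W, f = 0) ∧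
      (∀ i (u : ℤ), 0 ≤ u → ∀ h : (G i)⟦u⟧ ⟶ Z, ∃ g : (G i)⟦u⟧ ⟶ W, h = g ≫ ψ) := by
  classical
  let J := Σ i : ι, Σ u : {u : ℤ // 0 ≤ u}, ((G i)⟦u.1⟧ ⟶ Z)
  let F : J → C := fun j => (G j.1)⟦j.2.1.1⟧
  refine ⟨∐ F, Sigma.desc (fun j => j.2.2), ?_, ?_, ?_⟩
  · exact (susp_suspClosed _).2.2.2.2 J F _ (colimit.isColimit _)
      (fun j => suspClosed_shift_nonneg (susp_suspClosed (Set.range G))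
        (mem_susp_self (Set.mem_range_self j.1)) j.2.1.1 j.2.1.2)
  · intro i u hu f
    refine hom_zero_into_cofan (isCompactObj_shift (hcpt i) u) F _ (colimit.isColimit _) ?_ f
    intro j g'
    exact van_shift u j.2.1.1 (u - j.2.1.1) rfl
      (fun f' => hGG0 i j.1 (u - j.2.1.1) (by have := j.2.1.2; omega) f') g'
  · intro i u hu h
    exact ⟨Sigma.ι F ⟨i, ⟨u, hu⟩, h⟩, by rw [Sigma.ι_desc]⟩

lemma step (hcpt : ∀ i, IsCompactObj (G i))
    (hGG0 : ∀ i j (u : ℤ), u < 0 → ∀ f : (G i)⟦u⟧ ⟶ G j, f = 0)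
    (N : C) (X : C) (q : X ⟶ N)
    (hmem : X ∈ Susp (Set.range G))
    (hvan : ∀ i (u : ℤ), u < 0 → ∀ f : (G i)⟦u⟧ ⟶ X, f = 0) :
    ∃ (X' : C) (d : X ⟶ X') (q' : X' ⟶ N),
      X' ∈ Susp (Set.range G) ∧
      (∀ i (u : ℤ), u < 0 → ∀ f : (G i)⟦u⟧ ⟶ X', f = 0) ∧
      q = d ≫ q' ∧
      (∀ i (u : ℤ) (g : (G i)⟦u⟧ ⟶ X), g ≫ q = 0 → g ≫ d = 0) := by
  obtain ⟨Z, a, b, hTq⟩ := Pretriangulated.distinguished_cocone_triangle q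
  have hT' := inv_rot_of_distTriang _ hTq
  obtain ⟨W, ψ, hWmem, hWvan, hWsurj⟩ := exists_P G hcpt hGG0 ((Triangle.mk q a b).invRotate.obj₁)
  obtain ⟨X', d, w', hTd⟩ :=
    Pretriangulated.distinguished_cocone_triangle (ψ ≫ (Triangle.mk q a b).invRotate.mor₁)
  have hm12 : (Triangle.mk q a b).invRotate.mor₁ ≫ q = 0 :=
    comp_distTriang_mor_zero₁₂ _ hT'
  have h0 : (ψ ≫ (Triangle.mk q a b).invRotate.mor₁) ≫ q = 0 := by
    exact (Category.assoc _ _ _).trans ((congrArg _ hm12).trans comp_zero)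
  obtain ⟨q', hq'⟩ := Triangle.yoneda_exact₂ _ hTd q h0
  refine ⟨X', d, q', ?_, ?_, hq', ?_⟩
  · exact suspClosed_cone (susp_suspClosed _) _ hTd hWmem hmem
  · intro i u hu f
    have hb : f ≫ w' = 0 :=
      van_shift u 1 (u - 1) rfl (fun f' => hWvan i (u-1) (by omega) f') (f ≫ w')
    obtain ⟨h, rfl⟩ := Triangle.coyoneda_exact₃ _ hTd f hb
    rw [hvan i u hu h]; exact zero_comp
  · intro i u g hgq
    by_cases hu : 0 ≤ u
    · obtain ⟨h, rfl⟩ := Triangle.coyoneda_exact₂ _ hT' g hgq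
      obtain ⟨g', rfl⟩ := hWsurj i u hu h
      have h12 : (ψ ≫ (Triangle.mk q a b).invRotate.mor₁) ≫ d = 0 :=
        comp_distTriang_mor_zero₁₂ _ hTd
      simp only [Category.assoc]
      exact (Category.assoc _ _ _).trans ((congrArg _ h12).trans comp_zero)
    · rw [hvan i u (by omega) g]; exact zero_comp

lemma tower_exists (hcpt : ∀ i, IsCompactObj (G i))
    (hGG0 : ∀ i j (u : ℤ), u < 0 → ∀ f : (G i)⟦u⟧ ⟶ G j, f = 0) (N : C) :
    ∃ (XX : ℕ → C) (qq : ∀ k, XX k ⟶ N) (dd : ∀ k, XX k ⟶ XX (k+1)),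
      (∀ k, XX k ∈ Susp (Set.range G)) ∧
      (∀ k, qq k = dd k ≫ qq (k+1)) ∧
      (∀ k i (u : ℤ) (g : (G i)⟦u⟧ ⟶ XX k), g ≫ qq k = 0 → g ≫ dd k = 0) ∧
      (∀ i (u : ℤ), 0 ≤ u → ∀ h : (G i)⟦u⟧ ⟶ N, ∃ g : (G i)⟦u⟧ ⟶ XX 0, h = g ≫ qq 0) := by
  classical
  obtain ⟨X₀, q₀, hmem₀, hvan₀, hsurj₀⟩ := exists_P G hcpt hGG0 N
  let TT := {pp : Σ' (X : C), X ⟶ N //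
    pp.1 ∈ Susp (Set.range G) ∧ ∀ i (u : ℤ), u < 0 → ∀ f : (G i)⟦u⟧ ⟶ pp.1, f = 0}
  have hstep : ∀ t : TT, ∃ (t' : TT) (d : t.1.1 ⟶ t'.1.1),
      t.1.2 = d ≫ t'.1.2 ∧
      (∀ i (u : ℤ) (g : (G i)⟦u⟧ ⟶ t.1.1), g ≫ t.1.2 = 0 → g ≫ d = 0) := by
    rintro ⟨⟨X, q⟩, hmem, hvan⟩
    obtain ⟨X', d, q', h1, h2, h3, h4⟩ := step G hcpt hGG0 N X q hmem hvan
    exact ⟨⟨⟨X', q'⟩, h1, h2⟩, d, h3, h4⟩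
  let nxt : TT → TT := fun t => (hstep t).choose
  let dmap : ∀ t : TT, t.1.1 ⟶ (nxt t).1.1 := fun t => (hstep t).choose_spec.choose
  have hd1 : ∀ t, t.1.2 = dmap t ≫ (nxt t).1.2 :=
    fun t => (hstep t).choose_spec.choose_spec.1
  have hd2 : ∀ t i (u : ℤ) (g : (G i)⟦u⟧ ⟶ t.1.1), g ≫ t.1.2 = 0 → g ≫ dmap t = 0 :=
    fun t => (hstep t).choose_spec.choose_spec.2
  let t0 : TT := ⟨⟨X₀, q₀⟩, hmem₀, hvan₀⟩
  let tow : ℕ → TT := fun k => Nat.rec t0 (fun _ t => nxt t) k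
  refine ⟨fun k => (tow k).1.1, fun k => (tow k).1.2, fun k => dmap (tow k),
    fun k => (tow k).2.1, fun k => hd1 (tow k), fun k => hd2 (tow k), hsurj₀⟩

lemma mem_susp_of_van (hcpt : ∀ i, IsCompactObj (G i))
    (hgen : ∀ M : C, (∀ (i : ι) (n : ℤ) (f : (G i)⟦n⟧ ⟶ M), f = 0) → IsZero M)
    (hGG0 : ∀ i j (u : ℤ), u < 0 → ∀ f : (G i)⟦u⟧ ⟶ G j, f = 0)
    (N : C) (hN : ∀ i (u : ℤ), u < 0 → ∀ f : (G i)⟦u⟧ ⟶ N, f = 0) :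
    N ∈ Susp (Set.range G) := by
  classical
  obtain ⟨XX, qq, dd, hmem, hq, hkill, hsurj₀⟩ := tower_exists G hcpt hGG0 N
  -- the telescope
  let κ := ULift.{v} ℕ
  let Xf : κ → C := fun k => XX k.down
  let TS := ∐ Xf
  let φ : TS ⟶ TS := Sigma.desc (fun k => Sigma.ι Xf k - dd k.down ≫ Sigma.ι Xf ⟨k.down+1⟩)
  obtain ⟨Y, p, wY, hTY⟩ := Pretriangulated.distinguished_cocone_triangle φ
  have hTSmem : TS ∈ Susp (Set.range G) :=
    (susp_suspClosed _).2.2.2.2 κ Xf _ (colimit.isColimit _) (fun k => hmem k.down)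
  have hYmem : Y ∈ Susp (Set.range G) :=
    suspClosed_cone (susp_suspClosed _) _ hTY hTSmem hTSmem
  let dq : TS ⟶ N := Sigma.desc (fun k => qq k.down)
  have hιφ : ∀ k : κ, Sigma.ι Xf k ≫ φ =
      Sigma.ι Xf k - dd k.down ≫ Sigma.ι Xf ⟨k.down+1⟩ := by
    intro k; simp [φ]
  have hιdq : ∀ k : κ, Sigma.ι Xf k ≫ dq = qq k.down := by
    intro k; simp [dq]
  have hφdq : φ ≫ dq = 0 := by
    apply colimit.hom_ext
    rintro ⟨k⟩
    rw [comp_zero, ← Category.assoc]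
    show (Sigma.ι Xf k ≫ φ) ≫ dq = 0
    rw [hιφ, Preadditive.sub_comp, Category.assoc, hιdq, hιdq, ← hq k.down, sub_self]
  obtain ⟨r, hr0⟩ := Triangle.yoneda_exact₂ _ hTY dq hφdq
  have hr : dq = p ≫ r := hr0
  have hφp : φ ≫ p = 0 := comp_distTriang_mor_zero₁₂ _ hTY
  have step_p : ∀ k : ℕ, Sigma.ι Xf ⟨k⟩ ≫ p = dd k ≫ Sigma.ι Xf ⟨k+1⟩ ≫ p := by
    intro k
    have h1 : (Sigma.ι Xf ⟨k⟩ ≫ φ) ≫ p = 0 := by rw [Category.assoc, hφp, comp_zero]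
    rw [hιφ, Preadditive.sub_comp, sub_eq_zero] at h1
    rw [h1, Category.assoc]
  let tr : ∀ (k l : ℕ), XX k ⟶ XX (k + l) :=
    fun k l => Nat.rec (𝟙 (XX k)) (fun l g => g ≫ dd (k+l)) l
  have tr_q : ∀ k l, tr k l ≫ qq (k+l) = qq k := by
    intro k l
    induction l with
    | zero => exact Category.id_comp _
    | succ l ih =>
      show (tr k l ≫ dd (k+l)) ≫ qq (k+l+1) = qq k
      rw [Category.assoc, ← hq (k+l), ih]
  have tr_p : ∀ k l, tr k l ≫ Sigma.ι Xf ⟨k+l⟩ ≫ p = Sigma.ι Xf ⟨k⟩ ≫ p := by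
    intro k l
    induction l with
    | zero => exact Category.id_comp _
    | succ l ih =>
      show (tr k l ≫ dd (k+l)) ≫ Sigma.ι Xf ⟨k+l+1⟩ ≫ p = _
      rw [Category.assoc, ← step_p (k+l), ih]
  have push : ∀ (Q : C) (k K : ℕ), k ≤ K → ∀ g : Q ⟶ XX k,
      ∃ g' : Q ⟶ XX K, g ≫ Sigma.ι Xf ⟨k⟩ ≫ p = g' ≫ Sigma.ι Xf ⟨K⟩ ≫ p ∧
        g ≫ qq k = g' ≫ qq K := by
    intro Q k K hk g
    obtain ⟨l, rfl⟩ := Nat.exists_eq_add_of_le hk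
    exact ⟨g ≫ tr k l, by rw [Category.assoc, tr_p], by rw [Category.assoc, tr_q]⟩
  let cc : Cofan Xf := colimit.cocone (Discrete.functor Xf)
  have decomp : ∀ (Q : C) (x : DirectSum κ (fun k => Q ⟶ Xf k)),
      ∃ (K : ℕ) (g : Q ⟶ XX K),
        sumToHom Xf cc Q x ≫ p = g ≫ Sigma.ι Xf ⟨K⟩ ≫ p ∧
        sumToHom Xf cc Q x ≫ dq = g ≫ qq K := by
    intro Q x
    induction x using DirectSum.induction_on with
    | zero => exact ⟨0, 0, by simp, by simp⟩
    | of k y =>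
      refine ⟨k.down, y, ?_, ?_⟩
      · rw [sumToHom_of, Category.assoc]; rfl
      · rw [sumToHom_of, Category.assoc]
        show y ≫ Sigma.ι Xf k ≫ dq = _
        rw [hιdq]
    | add x₁ x₂ h₁ h₂ =>
      obtain ⟨K₁, g₁, hp₁, hq₁⟩ := h₁
      obtain ⟨K₂, g₂, hp₂, hq₂⟩ := h₂
      obtain ⟨g₁', hp₁', hq₁'⟩ := push Q K₁ (max K₁ K₂) (le_max_left _ _) g₁
      obtain ⟨g₂', hp₂', hq₂'⟩ := push Q K₂ (max K₁ K₂) (le_max_right _ _) g₂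
      refine ⟨max K₁ K₂, g₁' + g₂', ?_, ?_⟩
      · rw [map_add, Preadditive.add_comp, hp₁, hp₂, hp₁', hp₂', Preadditive.add_comp]
      · rw [map_add, Preadditive.add_comp, hq₁, hq₂, hq₁', hq₂', Preadditive.add_comp]
  -- injectivity of postcomposition with φ⟦1⟧ on homs from compacts
  let cc1 := shCofan Xf cc (1 : ℤ)
  have hcc1 : IsColimit cc1 := shCofanIsColimit Xf cc (colimit.isColimit _) 1
  have hwφ : wY ≫ φ⟦(1 : ℤ)⟧' = 0 := comp_distTriang_mor_zero₃₁ _ hTY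
  have inj1 : ∀ (i : ι) (u : ℤ) (t : (G i)⟦u⟧ ⟶ TS⟦(1 : ℤ)⟧),
      t ≫ φ⟦(1 : ℤ)⟧' = 0 → t = 0 := by
    intro i u t ht
    have hbij := isCompactObj_shift (hcpt i) u κ (fun k => (Xf k)⟦(1 : ℤ)⟧) cc1 hcc1
    obtain ⟨x, rfl⟩ := hbij.2 t
    let SS : DirectSum κ (fun k => (G i)⟦u⟧ ⟶ (Xf k)⟦(1 : ℤ)⟧) →+
        DirectSum κ (fun k => (G i)⟦u⟧ ⟶ (Xf k)⟦(1 : ℤ)⟧) :=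
      DirectSum.toAddMonoid (fun k =>
        (DirectSum.of (fun k' => (G i)⟦u⟧ ⟶ (Xf k')⟦(1 : ℤ)⟧) ⟨k.down+1⟩).comp
          (AddMonoidHom.mk' (fun y => y ≫ (dd k.down)⟦(1 : ℤ)⟧')
            (fun _ _ => Preadditive.add_comp _ _ _ _ _ _)))
    have hSof : ∀ (k : κ) (y : (G i)⟦u⟧ ⟶ (Xf k)⟦(1 : ℤ)⟧),
        SS (DirectSum.of _ k y) =
          DirectSum.of (fun k' => (G i)⟦u⟧ ⟶ (Xf k')⟦(1 : ℤ)⟧) ⟨k.down+1⟩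
            (y ≫ (dd k.down)⟦(1 : ℤ)⟧') := by
      intro k y
      exact DirectSum.toAddMonoid_of _ _ _
    have ekey : ∀ x, sumToHom _ cc1 ((G i)⟦u⟧) x ≫ φ⟦(1 : ℤ)⟧' =
        sumToHom _ cc1 ((G i)⟦u⟧) (x - SS x) := by
      intro x
      induction x using DirectSum.induction_on with
      | zero => simp; exact zero_comp
      | of k y =>
        have h1 : sumToHom _ cc1 ((G i)⟦u⟧) (DirectSum.of _ k y)
            = y ≫ (Sigma.ι Xf k)⟦(1 : ℤ)⟧' := by rw [sumToHom_of]; rfl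
        have h2 : sumToHom _ cc1 ((G i)⟦u⟧) (SS (DirectSum.of _ k y))
            = (y ≫ (dd k.down)⟦(1 : ℤ)⟧') ≫ (Sigma.ι Xf ⟨k.down+1⟩)⟦(1 : ℤ)⟧' := by
          rw [hSof, sumToHom_of]; rfl
        rw [map_sub, h1, h2]
        erw [Category.assoc, ← Functor.map_comp, hιφ]
        rw [Functor.map_sub,
          Preadditive.comp_sub, Functor.map_comp]
        simp only [Category.assoc]
        rfl
      | add x₁ x₂ h₁ h₂ =>
        rw [map_add]
        erw [Preadditive.add_comp]
        erw [h₁, h₂,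
          ← map_add (sumToHom (fun j => (Xf j)⟦(1 : ℤ)⟧) cc1 ((G i)⟦u⟧))]
        congr 1
        rw [map_add SS]
        abel
    erw [ekey] at ht
    have hx0 : x - SS x = 0 := hbij.1 (by rw [ht, map_zero]; rfl)
    have hxS : x = SS x := by rwa [sub_eq_zero] at hx0
    have hS0 : ∀ x : DirectSum κ (fun k => (G i)⟦u⟧ ⟶ (Xf k)⟦(1 : ℤ)⟧),
        (SS x) ⟨0⟩ = 0 := by
      intro x
      induction x using DirectSum.induction_on with
      | zero => rw [map_zero]; rfl
      | of k y =>
        rw [hSof]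
        exact DirectSum.of_eq_of_ne _ _ _
          (by intro h; exact Nat.succ_ne_zero _ (congrArg ULift.down h).symm)
      | add x₁ x₂ h₁ h₂ =>
        rw [map_add, DirectSum.add_apply, h₁, h₂, add_zero]
    have hSsucc : ∀ (x : DirectSum κ (fun k => (G i)⟦u⟧ ⟶ (Xf k)⟦(1 : ℤ)⟧)) (k : ℕ),
        (SS x) ⟨k+1⟩ = (x ⟨k⟩) ≫ (dd k)⟦(1 : ℤ)⟧' := by
      intro x k
      induction x using DirectSum.induction_on with
      | zero => simp
      | of j y =>
        rw [hSof]
        by_cases hjk : j = (⟨k⟩ : κ)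
        · subst hjk
          rw [DirectSum.of_eq_same, DirectSum.of_eq_same]
        · rw [DirectSum.of_eq_of_ne _ _ _ (by intro h; apply hjk; cases j; cases h; rfl),
            DirectSum.of_eq_of_ne _ _ _ (Ne.symm hjk), zero_comp]
      | add x₁ x₂ h₁ h₂ =>
        rw [map_add, DirectSum.add_apply, DirectSum.add_apply, h₁, h₂, Preadditive.add_comp]
    have hzero : ∀ k : ℕ, x ⟨k⟩ = 0 := by
      intro k
      induction k with
      | zero => rw [show x (⟨0⟩ : κ) = (SS x) ⟨0⟩ from congrFun (congrArg _ hxS) _, hS0]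
      | succ k ih =>
        rw [show x (⟨k+1⟩ : κ) = (SS x) ⟨k+1⟩ from congrFun (congrArg _ hxS) _,
          hSsucc, ih, zero_comp]
    have hx : x = 0 := DFinsupp.ext (fun j => by obtain ⟨k⟩ := j; exact hzero k)
    rw [hx, map_zero]; rfl
  -- r is injective on homs from (shifts of) generators
  have F2 : ∀ (i : ι) (u : ℤ) (v : (G i)⟦u⟧ ⟶ Y), v ≫ r = 0 → v = 0 := by
    intro i u v hv
    have hvw : v ≫ wY = 0 :=
      inj1 i u (v ≫ wY) (by rw [Category.assoc, hwφ, comp_zero])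
    obtain ⟨t, rfl⟩ := Triangle.coyoneda_exact₃ _ hTY v hvw
    have hbij := isCompactObj_shift (hcpt i) u κ Xf cc (colimit.isColimit _)
    obtain ⟨x, rfl⟩ := hbij.2 t
    obtain ⟨K, g, hp, hq'⟩ := decomp _ x
    have h1 : g ≫ qq K = 0 := by
      erw [← hq', hr, ← Category.assoc]
      exact hv
    have h2 : g ≫ dd K = 0 := hkill K i u g h1
    show sumToHom Xf cc _ x ≫ p = 0
    rw [hp, step_p K, ← Category.assoc, h2, zero_comp]
  -- r is surjective on homs from (shifts of) generators
  have F1 : ∀ (i : ι) (u : ℤ) (h : (G i)⟦u⟧ ⟶ N), ∃ v : (G i)⟦u⟧ ⟶ Y, h = v ≫ r := by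
    intro i u h
    by_cases hu : 0 ≤ u
    · obtain ⟨g0, hg0⟩ := hsurj₀ i u hu h
      refine ⟨g0 ≫ Sigma.ι Xf ⟨0⟩ ≫ p, ?_⟩
      erw [Category.assoc, Category.assoc, ← hr, hιdq]
      exact hg0
    · exact ⟨0, by rw [hN i u (by omega) h]; exact zero_comp.symm⟩
  -- conclude: the cone of r is zero
  obtain ⟨Z', a', b', hTr⟩ := Pretriangulated.distinguished_cocone_triangle r
  have hZ : IsZero Z' := by
    apply hgen
    intro i n f
    have hbr : b' ≫ r⟦(1 : ℤ)⟧' = 0 := by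
      have h23 := comp_distTriang_mor_zero₂₃ _ (rot_of_distTriang _ hTr)
      erw [Preadditive.comp_neg, neg_eq_zero] at h23
      exact h23
    have hfb : f ≫ b' = 0 := by
      refine inj_precomp_shift r ((G i)⟦n⟧) ?_ (f ≫ b')
        (by rw [Category.assoc, hbr, comp_zero])
      intro g hg
      have hiso : (G i)⟦(n + -1 : ℤ)⟧ ≅ ((G i)⟦n⟧)⟦(-1 : ℤ)⟧ :=
        (shiftFunctorAdd' C n (-1) (n + -1) rfl).app (G i)
      have hzero : hiso.hom ≫ g = 0 :=
        F2 i (n + -1) (hiso.hom ≫ g) (by erw [Category.assoc, hg, comp_zero])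
      rw [← Category.id_comp g, ← hiso.inv_hom_id, Category.assoc, hzero, comp_zero]
    obtain ⟨h, rfl⟩ := Triangle.coyoneda_exact₃ _ hTr f hfb
    obtain ⟨v, rfl⟩ := F1 i n h
    have hra : r ≫ (Triangle.mk r a' b').mor₂ = 0 := comp_distTriang_mor_zero₁₂ _ hTr
    erw [Category.assoc, hra, comp_zero]
    rfl
  have : IsIso r := (Triangle.isZero₃_iff_isIso₁ _ hTr).1 hZ
  exact (susp_suspClosed _).2.1 (asIso r) hYmem

end Main

/-- **Cohomological description of the aisles `D^{≤s}𝒜` of the derived category of a dg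
category.**  Here the derived category `D𝒜` of the small dg category `𝒜` is axiomatized as a
triangulated category `C` with small coproducts together with a family `G : ι → C` of compact
generators (the representable dg modules `A^∧`), so that the `i`-th cohomology of `M`
evaluated at `A` is `H^i M(A) = Hom_{D𝒜}(A^∧, M[i])`; the hypothesis that `𝒜` has cohomology
concentrated in degrees `(-∞, m]` reads `Hom(G i, (G j)[n]) = 0` for `n > m`, and
`D^{≤s}𝒜 = {M | M[s] ∈ Susp G}`.
Claim: if `M ∈ D^{≤s}𝒜` then `H^n M(A) = 0` for `n > m + s`; and when `m = 0` the converse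
holds. -/
theorem stmt4 [HasCoproducts.{v} C] {ι : Type v} (G : ι → C)
    (hcpt : ∀ i, IsCompactObj (G i))
    (hgen : ∀ M : C, (∀ (i : ι) (n : ℤ) (f : (G i)⟦n⟧ ⟶ M), f = 0) → IsZero M)
    (m : ℤ) (hcoh : ∀ (i j : ι) (n : ℤ), m < n → ∀ f : G i ⟶ (G j)⟦n⟧, f = 0)
    (s : ℤ) (M : C) :
    (M⟦s⟧ ∈ Susp (Set.range G) →
      ∀ (i : ι) (n : ℤ), m + s < n → ∀ f : G i ⟶ M⟦n⟧, f = 0) ∧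
    (m = 0 → (∀ (i : ι) (n : ℤ), s < n → ∀ f : G i ⟶ M⟦n⟧, f = 0) →
      M⟦s⟧ ∈ Susp (Set.range G)) := by
  have hGG : ∀ i j (u : ℤ), u < -m → ∀ f : (G i)⟦u⟧ ⟶ G j, f = 0 := by
    intro i j u hu f
    exact van_pull u (fun g => hcoh i j (-u) (by omega) g) f
  constructor
  · intro hM i n hn f
    have hS : M⟦s⟧ ∈ VanLt G (-m) :=
      susp_subset (suspClosed_vanLt G hcpt (-m) hGG) hM
    have hvan : ∀ f' : (G i)⟦(s - n : ℤ)⟧ ⟶ M⟦s⟧, f' = 0 :=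
      fun f' => hS i (s - n) (by omega) f'
    have hpush : ∀ g : G i ⟶ (M⟦s⟧)⟦(n - s : ℤ)⟧, g = 0 :=
      van_push (s - n) (n - s) (by omega) hvan
    have hiso : M⟦n⟧ ≅ (M⟦s⟧)⟦(n - s : ℤ)⟧ :=
      (shiftFunctorAdd' C s (n - s) n (by omega)).app M
    rw [← Category.comp_id f, ← hiso.hom_inv_id, ← Category.assoc,
      hpush (f ≫ hiso.hom), zero_comp]
  · intro hm hconv
    subst hm
    apply mem_susp_of_van G hcpt hgen (fun i j u hu f => hGG i j u (by omega) f)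
    intro i u hu f
    refine van_shift u s (u - s) rfl ?_ f
    intro f'
    refine van_pull (u - s) ?_ f'
    intro g
    exact hconv i (-(u - s)) (by omega) g
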